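/- Let S be the numerical semigroup (additive submonoid of ℕ) generated by integers 0 < a_1 < ⋯ < a_r, and for s ∈ S let λ(s) = min{λ_1 + ⋯ + λ_r : λ_i ∈ ℕ, s = λ_1 a_1 + ⋯ + λ_r a_r}. Let α and β be nonnegative real numbers with α < 1. Then there exists L ∈ ℕ such that for every integer l ≥ L and every s ∈ S with s ≤ a_r·α·l + β, one has λ(s) ≤ l. -/

import Mathlib

/-- `lam a s` is the least total number of generators (counted with multiplicity)
needed to write `s` as an ℕ-linear combination of the `a i`. -/
noncomputable def lam {r : ℕ} (a : Fin r → ℕ) (s : ℕ) : ℕ :=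
  sInf {n | ∃ c : Fin r → ℕ, (∑ i, c i) = n ∧ (∑ i, c i * a i) = s}

lemma exists_rep {r : ℕ} (a : Fin r → ℕ) {s : ℕ}
    (hs : s ∈ AddSubmonoid.closure (Set.range a)) :
    ∃ c : Fin r → ℕ, (∑ i, c i * a i) = s := by
  induction hs using AddSubmonoid.closure_induction with
  | mem x hx =>
      obtain ⟨i, rfl⟩ := hx
      exact ⟨fun j => if j = i then 1 else 0, by simp⟩
  | zero => exact ⟨0, by simp⟩
  | add x y _ _ hx hy =>
      obtain ⟨c, hc⟩ := hx
      obtain ⟨d, hd⟩ := hy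
      exact ⟨c + d, by simp [add_mul, Finset.sum_add_distrib, hc, hd]⟩

/-- for the numerical semigroup `S` generated by
`0 < a_1 < ⋯ < a_r` and nonnegative reals `α < 1` and `β`, there is `L ∈ ℕ`
such that for all `l ≥ L` and all `s ∈ S` with `s ≤ a_r·α·l + β` one has
`λ(s) ≤ l`. -/
theorem stmt1 {r : ℕ} (a : Fin (r + 1) → ℕ) (hpos : 0 < a 0) (hmono : StrictMono a)
    (α β : ℝ) (hα0 : 0 ≤ α) (hα1 : α < 1) (hβ : 0 ≤ β) :
    ∃ L : ℕ, ∀ l : ℕ, L ≤ l → ∀ s : ℕ,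
      s ∈ AddSubmonoid.closure (Set.range a) →
      (s : ℝ) ≤ (a (Fin.last r) : ℝ) * α * l + β →
      lam a s ≤ l := by
  set N : ℕ := a (Fin.last r) with hN
  have hNpos : 0 < N := lt_of_lt_of_le hpos (hmono.monotone (Fin.zero_le _))
  refine ⟨⌈((r : ℝ) * N + β / N) / (1 - α)⌉₊, fun l hl s hs hsle => ?_⟩
  -- minimal representation
  have hne : {n | ∃ c : Fin (r+1) → ℕ, (∑ i, c i) = n ∧ (∑ i, c i * a i) = s}.Nonempty := by
    obtain ⟨c, hc⟩ := exists_rep a hs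
    exact ⟨∑ i, c i, c, rfl, hc⟩
  obtain ⟨c, hcsum, hcval⟩ := Nat.sInf_mem hne
  -- in a minimal representation, c i < N for i ≠ last
  have hsmall : ∀ i : Fin (r+1), i ≠ Fin.last r → c i < N := by
    intro i hii
    by_contra hge
    push_neg at hge
    -- replace N copies of a i by (a i) copies of N
    set c' : Fin (r+1) → ℕ := fun j =>
      if j = i then c i - N else if j = Fin.last r then c (Fin.last r) + a i else c j with hc'
    have hlmem : Fin.last r ∈ Finset.univ.erase i :=
      Finset.mem_erase.mpr ⟨Ne.symm hii, Finset.mem_univ _⟩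
    have split : ∀ f : Fin (r+1) → ℕ, (∑ j, f j) =
        (∑ j ∈ (Finset.univ.erase i).erase (Fin.last r), f j) + f (Fin.last r) + f i := by
      intro f
      rw [← Finset.sum_erase_add _ _ (Finset.mem_univ i), ← Finset.sum_erase_add _ _ hlmem]
    have hsame : ∀ f g : Fin (r+1) → ℕ, (∀ j, j ≠ i → j ≠ Fin.last r → f j = g j) →
        (∑ j ∈ (Finset.univ.erase i).erase (Fin.last r), f j) =
        ∑ j ∈ (Finset.univ.erase i).erase (Fin.last r), g j := by
      intro f g h
      refine Finset.sum_congr rfl fun j hj => ?_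
      simp only [Finset.mem_erase] at hj
      exact h j hj.2.1 hj.1
    have h2 : c' (Fin.last r) = c (Fin.last r) + a i := by simp [hc', Ne.symm hii]
    have h3 : c' i = c i - N := by simp [hc']
    have hcc' : ∀ j, j ≠ i → j ≠ Fin.last r → c' j = c j := by
      intro j hji hjl; simp [hc', hji, hjl]
    obtain ⟨d, hd⟩ := Nat.exists_eq_add_of_le hge
    have hval' : (∑ j, c' j * a j) = s := by
      rw [← hcval, split (fun j => c' j * a j), split (fun j => c j * a j),
        hsame _ _ (fun j hji hjl => by rw [hcc' j hji hjl])]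
      simp only [h2, h3, ← hN, hd, Nat.add_sub_cancel_left]
      ring
    have hai : a i < N := hmono (lt_of_le_of_ne (Fin.le_last i) hii)
    have hsum' : (∑ j, c' j) < ∑ j, c j := by
      rw [split c', split c, hsame c' c hcc', h2, h3, hd, Nat.add_sub_cancel_left]
      linarith
    have hsi : sInf {n | ∃ c : Fin (r+1) → ℕ, (∑ i, c i) = n ∧ (∑ i, c i * a i) = s}
        ≤ ∑ j, c' j := Nat.sInf_le ⟨c', rfl, hval'⟩
    rw [← hcsum] at hsi
    exact absurd hsi (not_le.mpr hsum')
  -- bound: lam a s ≤ Σ c i ≤ r * N + c last, and c last * N ≤ s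
  have hlam : lam a s ≤ ∑ i, c i := by unfold lam; exact hcsum.ge
  have hbound : (∑ i, c i) ≤ r * N + c (Fin.last r) := by
    rw [← Finset.sum_erase_add _ c (Finset.mem_univ (Fin.last r))]
    have h1 : ∑ j ∈ Finset.univ.erase (Fin.last r), c j ≤
        (Finset.univ.erase (Fin.last r)).card • N := by
      refine Finset.sum_le_card_nsmul _ _ _ fun j hj => ?_
      exact le_of_lt (hsmall j (Finset.mem_erase.mp hj).1)
    have h2 : (Finset.univ.erase (Fin.last r) : Finset (Fin (r+1))).card = r := by
      rw [Finset.card_erase_of_mem (Finset.mem_univ _)]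
      simp
    rw [h2, smul_eq_mul] at h1
    linarith
  have hclast : c (Fin.last r) * N ≤ s := by
    rw [← hcval, hN]
    exact Finset.single_le_sum (f := fun i => c i * a i) (fun i _ => Nat.zero_le _)
      (Finset.mem_univ (Fin.last r))
  -- now real arithmetic
  have hNR : (0:ℝ) < (N:ℝ) := by exact_mod_cast hNpos
  have hclastR : (c (Fin.last r) : ℝ) ≤ (s:ℝ) / N := by
    rw [le_div_iff₀ hNR]
    exact_mod_cast hclast
  have hsdiv : (s:ℝ) / N ≤ α * l + β / N := by
    rw [div_le_iff₀ hNR]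
    calc (s:ℝ) ≤ (N:ℝ) * α * l + β := hsle
      _ = (α * l + β / N) * N := by field_simp
  have hLr : ((r : ℝ) * N + β / N) / (1 - α) ≤ (l:ℝ) := by
    calc ((r : ℝ) * N + β / N) / (1 - α) ≤ (⌈((r : ℝ) * N + β / N) / (1 - α)⌉₊ : ℝ) :=
        Nat.le_ceil _
      _ ≤ l := by exact_mod_cast hl
  have hkey : ((r : ℝ) * N + β / N) ≤ (1 - α) * l := by
    rw [div_le_iff₀ (by linarith : (0:ℝ) < 1 - α)] at hLr
    linarith
  have hfinal : (lam a s : ℝ) ≤ (l : ℝ) := by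
    have h1 : (lam a s : ℝ) ≤ (r : ℝ) * N + c (Fin.last r) := by
      exact_mod_cast le_trans hlam hbound
    calc (lam a s : ℝ) ≤ (r : ℝ) * N + (s:ℝ)/N := by linarith
      _ ≤ (r : ℝ) * N + (α * l + β / N) := by linarith
      _ ≤ (1 - α) * l + α * l := by linarith
      _ = l := by ring
  exact_mod_cast hfinal
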